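/- Let w be an infinite partial word with at least one hole, over an alphabet with at least 2 letters. If there exists a completion ŵ of w such that Sub(w) = Sub(ŵ), then the shift of w by H(1) (i.e., the word σ_{H(1)}(w) starting just after the first hole) is recurrent; in particular, w is ultimately recurrent. -/

import Mathlib

open Set

variable {A : Type*}

/-- The full word `u` occurs at position `i` in the partial word `w`
(`none` is the hole symbol, compatible with every letter). -/
def Occurs (w : ℕ → Option A) (u : List A) (i : ℕ) : Prop :=
  ∀ j : Fin u.length, w (i + (j : ℕ)) = none ∨ w (i + (j : ℕ)) = some (u.get j)

/-- `u` is a subword of `w`: it occurs at some position. -/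
def IsSubword (w : ℕ → Option A) (u : List A) : Prop :=
  ∃ i, Occurs w u i

/-- `u` is a recurrent subword of `w`: it occurs at infinitely many positions. -/
def IsRecSubword (w : ℕ → Option A) (u : List A) : Prop :=
  {i | Occurs w u i}.Infinite

/-- Subword complexity: number of distinct full words of length `n`
that are subwords of `w`. -/
noncomputable def pcomp (w : ℕ → Option A) (n : ℕ) : ℕ :=
  {u : List A | u.length = n ∧ IsSubword w u}.ncard

/-- Number of recurrent subwords of length `n`. -/
noncomputable def rcomp (w : ℕ → Option A) (n : ℕ) : ℕ :=
  {u : List A | u.length = n ∧ IsRecSubword w u}.ncard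

/-- `w` is recurrent: every subword occurs infinitely often. -/
def Recurrent (w : ℕ → Option A) : Prop :=
  ∀ u : List A, IsSubword w u → IsRecSubword w u

/-- `w` is ultimately recurrent: some shift of `w` is recurrent. -/
def UltimatelyRecurrent (w : ℕ → Option A) : Prop :=
  ∃ p, Recurrent (fun i => w (i + p))

/-- `c` is a completion of `w`: it agrees with `w` at every non-hole position. -/
def IsCompletion (w : ℕ → Option A) (c : ℕ → A) : Prop :=
  ∀ i, ∀ a : A, w i = some a → c i = a

/-- `w` is uniformly recurrent: for every subword `u` there is a window size `m`
such that every factor of `w` of length `m` contains an occurrence of `u`. -/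
def UniformlyRecurrent (w : ℕ → Option A) : Prop :=
  ∀ u : List A, IsSubword w u →
    ∃ m, ∀ i, ∃ j, i ≤ j ∧ j + u.length ≤ i + m ∧ Occurs w u j

/-- Every factor of `w` of length `m` contains every length-`n` subword of `w`. -/
def GoodWindow (w : ℕ → Option A) (n m : ℕ) : Prop :=
  ∀ u : List A, u.length = n → IsSubword w u →
    ∀ i, ∃ j, i ≤ j ∧ j + n ≤ i + m ∧ Occurs w u j

/-- The recurrence function `R_w(n)`: the least window size `m` such that every
factor of length `m` contains every subword of length `n`. -/
noncomputable def Rfun (w : ℕ → Option A) (n : ℕ) : ℕ :=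
  sInf {m | GoodWindow w n m}

/-- `w` is ultimately periodic: from some position on, `w` is compatible with a
periodic sequence of letters. -/
def UltimatelyPeriodic (w : ℕ → Option A) : Prop :=
  ∃ N p, 0 < p ∧ ∃ a : ℕ → A, ∀ i, N ≤ i → w i = none ∨ w i = some (a (i % p))

lemma occurs_shift (w : ℕ → Option A) (p : ℕ) (u : List A) (i : ℕ) :
    Occurs (fun k => w (k + p)) u i ↔ Occurs w u (i + p) := by
  constructor <;> intro H j <;> have hj := H j
  · simpa [show i + (j : ℕ) + p = i + p + (j : ℕ) by omega] using hj
  · simpa [show i + (j : ℕ) + p = i + p + (j : ℕ) by omega] using hj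

lemma occ_step (w : ℕ → Option A) (h : ℕ)
    (hh : w h = none)
    (c : ℕ → A) (hc : IsCompletion w c)
    (hsub : ∀ u : List A, IsSubword w u ↔ IsSubword (fun i => some (c i)) u)
    (b : A) (hb : b ≠ c h)
    (u : List A) (j : ℕ) (hj : h < j) (ho : Occurs w u j) :
    ∃ k, 1 ≤ k ∧ Occurs w u (k + j) := by
  set f : ℕ → A := fun i => if i = h then b else if i < j then c i else u.getD (i - j) b
    with hf
  set z : List A := (List.range (j + u.length)).map f with hz
  have hzlen : z.length = j + u.length := by simp [hz]
  have hzget : ∀ i : Fin z.length, z.get i = f i := by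
    intro i
    simp [hz]
  have hoz : Occurs w z 0 := by
    intro i
    have hi : (i : ℕ) < j + u.length := by have := i.isLt; omega
    rw [zero_add, hzget i]
    by_cases hih : (i : ℕ) = h
    · left; rw [hih]; exact hh
    cases hwi : w (i : ℕ) with
    | none => left; rfl
    | some a =>
      right
      by_cases hij : (i : ℕ) < j
      · have : c i = a := hc _ _ hwi
        simp [hf, hih, hij, this]
      · have hlt : (i : ℕ) - j < u.length := by omega
        have := ho ⟨(i : ℕ) - j, hlt⟩
        rw [show j + ((⟨(i : ℕ) - j, hlt⟩ : Fin u.length) : ℕ) = (i : ℕ) by simp; omega,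
          hwi] at this
        rcases this with h1 | h1
        · exact absurd h1 (by simp)
        · have ha : a = u.get ⟨(i : ℕ) - j, hlt⟩ := by
            simpa using h1
          have : f i = u.get ⟨(i : ℕ) - j, hlt⟩ := by
            simp only [hf, if_neg hih, if_neg hij]
            exact List.getD_eq_get u b ⟨(i : ℕ) - j, hlt⟩
          rw [this, ha]
  have hzsub : IsSubword (fun i => some (c i)) z := (hsub z).mp ⟨0, hoz⟩
  obtain ⟨k, hk⟩ := hzsub
  have hck : ∀ i : ℕ, i < j + u.length → c (k + i) = f i := by
    intro i hi
    have hi' : i < z.length := by omega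
    have := hk ⟨i, hi'⟩
    rcases this with h1 | h1
    · exact absurd h1 (by simp)
    · have := hzget ⟨i, hi'⟩
      simp only [this] at h1
      simpa using h1
  have hk1 : 1 ≤ k := by
    by_contra hk0
    have hk0 : k = 0 := by omega
    have := hck h (by omega)
    rw [hk0, zero_add] at this
    simp only [hf, if_pos rfl] at this
    exact hb this.symm
  refine ⟨k, hk1, ?_⟩
  intro jj
  have hlt : j + (jj : ℕ) < j + u.length := by have := jj.isLt; omega
  have hcv := hck (j + (jj : ℕ)) hlt
  have hfv : f (j + (jj : ℕ)) = u.get jj := by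
    simp only [hf, if_neg (by omega : ¬ j + (jj : ℕ) = h),
      if_neg (by omega : ¬ j + (jj : ℕ) < j)]
    rw [show j + (jj : ℕ) - j = (jj : ℕ) by omega]
    exact List.getD_eq_get u b jj
  cases hwv : w (k + j + (jj : ℕ)) with
  | none => left; rfl
  | some a =>
    right
    have : c (k + j + (jj : ℕ)) = a := hc _ _ hwv
    rw [show k + j + (jj : ℕ) = k + (j + (jj : ℕ)) by omega] at this
    rw [hcv, hfv] at this
    rw [this]

theorem stmt15 [Nontrivial A] (w : ℕ → Option A) (h : ℕ)
    (hh : w h = none) (hmin : ∀ j < h, w j ≠ none)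
    (c : ℕ → A) (hc : IsCompletion w c)
    (hsub : ∀ u : List A, IsSubword w u ↔ IsSubword (fun i => some (c i)) u) :
    Recurrent (fun i => w (i + (h + 1))) ∧ UltimatelyRecurrent w := by
  obtain ⟨b, hb⟩ := exists_ne (c h)
  have hrec : Recurrent (fun i => w (i + (h + 1))) := by
    rintro u ⟨i0, hi0⟩
    have hi0' : Occurs w u (i0 + (h + 1)) := (occurs_shift w (h + 1) u i0).mp hi0
    have key : ∀ n, ∃ j, n ≤ j ∧ h < j ∧ Occurs w u j := by
      intro n
      induction n with
      | zero => exact ⟨i0 + (h + 1), by omega, by omega, hi0'⟩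
      | succ n ih =>
        obtain ⟨j, h1, h2, h3⟩ := ih
        obtain ⟨k, hk1, hk2⟩ := occ_step w h hh c hc hsub b hb u j h2 h3
        exact ⟨k + j, by omega, by omega, hk2⟩
    intro hfin
    obtain ⟨m, hm⟩ := hfin.bddAbove
    obtain ⟨j, h1, h2, h3⟩ := key (m + h + 2)
    have hmem : j - (h + 1) ∈ {i | Occurs (fun i => w (i + (h + 1))) u i} := by
      show Occurs (fun i => w (i + (h + 1))) u (j - (h + 1))
      rw [occurs_shift, show j - (h + 1) + (h + 1) = j by omega]
      exact h3
    have := hm hmem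
    omega
  exact ⟨hrec, ⟨h + 1, hrec⟩⟩
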